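/- Let b,c,d,e,f ∈ ℂ and let T ∈ M_4(ℂ) be the strictly upper triangular matrix with rows (0,0,b,c), (0,0,d,e), (0,0,0,f), (0,0,0,0) (i.e., the general nilpotent form with a = 0). Then tr[T(T(T*)² − (T*)²T)TT*] = |f|²[(|b|² + |d|²)(|b|² + |d|² − |c|² − |e|² − |f|²) + |b·conj(c) + d·conj(e)|²] and tr[T²T*(T*T − TT*)T*T²T*] = f·(b·conj(c) + d·conj(e))·tr[T(T(T*)² − (T*)²T)TT*]. -/

import Mathlib

open Matrix

theorem mul_fin_four' {α : Type*} [NonUnitalNonAssocSemiring α] (a00 a01 a02 a03 a10 a11 a12 a13 a20 a21 a22 a23 a30 a31 a32 a33 b00 b01 b02 b03 b10 b11 b12 b13 b20 b21 b22 b23 b30 b31 b32 b33 : α) :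
    !![a00, a01, a02, a03;
       a10, a11, a12, a13;
       a20, a21, a22, a23;
       a30, a31, a32, a33] * !![b00, b01, b02, b03;
       b10, b11, b12, b13;
       b20, b21, b22, b23;
       b30, b31, b32, b33] =
    !![a00*b00 + a01*b10 + a02*b20 + a03*b30, a00*b01 + a01*b11 + a02*b21 + a03*b31, a00*b02 + a01*b12 + a02*b22 + a03*b32, a00*b03 + a01*b13 + a02*b23 + a03*b33;
       a10*b00 + a11*b10 + a12*b20 + a13*b30, a10*b01 + a11*b11 + a12*b21 + a13*b31, a10*b02 + a11*b12 + a12*b22 + a13*b32, a10*b03 + a11*b13 + a12*b23 + a13*b33;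
       a20*b00 + a21*b10 + a22*b20 + a23*b30, a20*b01 + a21*b11 + a22*b21 + a23*b31, a20*b02 + a21*b12 + a22*b22 + a23*b32, a20*b03 + a21*b13 + a22*b23 + a23*b33;
       a30*b00 + a31*b10 + a32*b20 + a33*b30, a30*b01 + a31*b11 + a32*b21 + a33*b31, a30*b02 + a31*b12 + a32*b22 + a33*b32, a30*b03 + a31*b13 + a32*b23 + a33*b33] := by
  ext i j
  fin_cases i <;> fin_cases j <;>
    simp [Matrix.mul_apply, Fin.sum_univ_four, vecHead, vecTail]

theorem sub_fin_four' {α : Type*} [SubtractionMonoid α] (a00 a01 a02 a03 a10 a11 a12 a13 a20 a21 a22 a23 a30 a31 a32 a33 b00 b01 b02 b03 b10 b11 b12 b13 b20 b21 b22 b23 b30 b31 b32 b33 : α) :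
    !![a00, a01, a02, a03;
       a10, a11, a12, a13;
       a20, a21, a22, a23;
       a30, a31, a32, a33] - !![b00, b01, b02, b03;
       b10, b11, b12, b13;
       b20, b21, b22, b23;
       b30, b31, b32, b33] =
    !![a00 - b00, a01 - b01, a02 - b02, a03 - b03;
       a10 - b10, a11 - b11, a12 - b12, a13 - b13;
       a20 - b20, a21 - b21, a22 - b22, a23 - b23;
       a30 - b30, a31 - b31, a32 - b32, a33 - b33] := by
  ext i j
  fin_cases i <;> fin_cases j <;>
    simp [Matrix.sub_apply, vecHead, vecTail]

theorem trace_fin_four' {α : Type*} [AddCommMonoid α] (a00 a01 a02 a03 a10 a11 a12 a13 a20 a21 a22 a23 a30 a31 a32 a33 : α) :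
    Matrix.trace !![a00, a01, a02, a03;
       a10, a11, a12, a13;
       a20, a21, a22, a23;
       a30, a31, a32, a33] = a00 + a11 + a22 + a33 := by
  simp [Matrix.trace, Fin.sum_univ_four, vecHead, vecTail]

theorem matrix_sq' {α : Type*} [Monoid α] (A : α) : A ^ 2 = A * A := sq A

set_option maxHeartbeats 4000000 in
theorem trace_formulas_a_eq_zero (b c d e f : ℂ)
    (T : Matrix (Fin 4) (Fin 4) ℂ)
    (hT : T = !![0, 0, b, c; 0, 0, d, e; 0, 0, 0, f; 0, 0, 0, 0]) :
    (T * (T * Tᴴ ^ 2 - Tᴴ ^ 2 * T) * T * Tᴴ).trace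
      = ((‖f‖ ^ 2 *
          ((‖b‖ ^ 2 + ‖d‖ ^ 2) *
            (‖b‖ ^ 2 + ‖d‖ ^ 2 - ‖c‖ ^ 2
              - ‖e‖ ^ 2 - ‖f‖ ^ 2)
            + ‖b * (starRingEnd ℂ) c + d * (starRingEnd ℂ) e‖ ^ 2) : ℝ) : ℂ) ∧
    (T ^ 2 * Tᴴ * (Tᴴ * T - T * Tᴴ) * Tᴴ * T ^ 2 * Tᴴ).trace
      = f * (b * (starRingEnd ℂ) c + d * (starRingEnd ℂ) e) *
          (T * (T * Tᴴ ^ 2 - Tᴴ ^ 2 * T) * T * Tᴴ).trace := by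
  have hH : Tᴴ = !![0,0,0,0; 0,0,0,0; (starRingEnd ℂ) b, (starRingEnd ℂ) d, 0, 0;
      (starRingEnd ℂ) c, (starRingEnd ℂ) e, (starRingEnd ℂ) f, 0] := by
    subst hT
    ext i j
    fin_cases i <;> fin_cases j <;> simp [vecHead, vecTail]
  rw [hH, hT]
  simp only [matrix_sq' (A := (_ : Matrix (Fin 4) (Fin 4) ℂ))]
  simp only [mul_fin_four', sub_fin_four', trace_fin_four']
  have h : ((‖f‖ ^ 2 *
          ((‖b‖ ^ 2 + ‖d‖ ^ 2) *
            (‖b‖ ^ 2 + ‖d‖ ^ 2 - ‖c‖ ^ 2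
              - ‖e‖ ^ 2 - ‖f‖ ^ 2)
            + ‖b * (starRingEnd ℂ) c + d * (starRingEnd ℂ) e‖ ^ 2) : ℝ) : ℂ)
      = f * (starRingEnd ℂ) f *
          ((b * (starRingEnd ℂ) b + d * (starRingEnd ℂ) d) *
            (b * (starRingEnd ℂ) b + d * (starRingEnd ℂ) d - c * (starRingEnd ℂ) c
              - e * (starRingEnd ℂ) e - f * (starRingEnd ℂ) f)
            + (b * (starRingEnd ℂ) c + d * (starRingEnd ℂ) e) *
              ((starRingEnd ℂ) b * c + (starRingEnd ℂ) d * e)) := by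
    simp only [Complex.sq_norm, Complex.ofReal_mul, Complex.ofReal_add, Complex.ofReal_sub,
      ← Complex.mul_conj, map_add, RingHom.map_mul, Complex.conj_conj]
  constructor
  · refine Eq.trans ?_ h.symm
    ring
  · ring
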